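/- Fix constants c > 0 and an integer d ≥ 0. There exist p₀ > 0 and a constant c′ > 0 (both depending only on c and d) such that for every p ∈ (0,p₀) and every d-uniform hypergraph H on a finite vertex set, there exists a subhypergraph H′ ⊆ H (obtained by removing hyperedges) such that: (1) H′ has branching factor c/p; and (2) hit_p(H′) ≥ c′ · hit_p(H). -/

import Mathlib

open Finset

/-- `hitp V p H = Pr_{S ∼ µ_p}[H|_S ≠ ∅]`, where `µ_p` puts each vertex of `V`
in `S` independently with probability `p`, and `H|_S = {e ∈ H : e ⊆ S}`. -/
def hitp (V : Type) [Fintype V] [DecidableEq V] (p : ℝ) (H : Finset (Finset V)) : ℝ :=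
  ∑ S : Finset V,
    if (H.filter (fun e => e ⊆ S)).Nonempty then
      p ^ S.card * (1 - p) ^ (Fintype.card V - S.card)
    else 0

/-- `H` has branching factor `ρ`: for every `A` and `r ≥ 0`, the number of
hyperedges `e ∈ H` with `e ⊇ A` and `|e| = |A| + r` is at most `ρ^r`. -/
def branching (V : Type) [DecidableEq V] (H : Finset (Finset V)) (ρ : ℝ) : Prop :=
  ∀ (A : Finset V) (r : ℕ),
    ((H.filter (fun e => A ⊆ e ∧ e.card = A.card + r)).card : ℝ) ≤ ρ ^ r

lemma sum_if_subset (V : Type) [Fintype V] [DecidableEq V] (p : ℝ) (T : Finset V) :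
    ∑ S : Finset V, (if T ⊆ S then p ^ S.card * (1 - p) ^ (Fintype.card V - S.card) else 0)
      = p ^ T.card := by
  classical
  have h := Finset.prod_add (fun _ : V => p) (fun i : V => if i ∈ T then 0 else 1 - p)
    (Finset.univ : Finset V)
  have hL : (∏ i : V, (p + if i ∈ T then (0:ℝ) else 1 - p)) = p ^ T.card := by
    have : ∀ i : V, (p + if i ∈ T then (0:ℝ) else 1 - p) = if i ∈ T then p else 1 := by
      intro i; by_cases hi : i ∈ T <;> simp [hi]
    rw [Finset.prod_congr rfl (fun i _ => this i), Finset.prod_ite_mem,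
      Finset.univ_inter, Finset.prod_const]
  have hR : ∀ S : Finset V,
      (∏ i ∈ S, p) * (∏ i ∈ Finset.univ \ S, (if i ∈ T then (0:ℝ) else 1 - p))
        = if T ⊆ S then p ^ S.card * (1 - p) ^ (Fintype.card V - S.card) else 0 := by
    intro S
    by_cases h : T ⊆ S
    · rw [if_pos h, Finset.prod_const]
      congr 1
      have h1 : ∀ i ∈ Finset.univ \ S, (if i ∈ T then (0:ℝ) else 1 - p) = 1 - p := by
        intro i hi
        rw [if_neg]
        exact fun hiT => (Finset.mem_sdiff.mp hi).2 (h hiT)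
      rw [Finset.prod_congr rfl h1, Finset.prod_const]
      congr 1
      rw [Finset.card_sdiff_of_subset (Finset.subset_univ S), Finset.card_univ]
    · rw [if_neg h]
      obtain ⟨x, hxT, hxS⟩ := Finset.not_subset.mp h
      apply mul_eq_zero_of_right
      exact Finset.prod_eq_zero (Finset.mem_sdiff.mpr ⟨Finset.mem_univ x, hxS⟩) (if_pos hxT)
  rw [hL, Finset.powerset_univ] at h
  rw [h]
  exact (Finset.sum_congr rfl (fun S _ => hR S)).symm

/-- Hypergraph pruning lemma, `µ_p`-biased setting. -/
theorem stmt4 :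
    ∀ c : ℝ, 0 < c → ∀ d : ℕ,
      ∃ p₀ : ℝ, 0 < p₀ ∧ ∃ c' : ℝ, 0 < c' ∧
        ∀ p : ℝ, p ∈ Set.Ioo (0:ℝ) p₀ →
          ∀ (V : Type) [Fintype V] [DecidableEq V]
            (H : Finset (Finset V)), (∀ e ∈ H, e.card = d) →
            ∃ H' ⊆ H, branching V H' (c / p) ∧ c' * hitp V p H ≤ hitp V p H' := by
  classical
  intro c hc d
  set cc : ℝ := min c ((2:ℝ)^(d+1))⁻¹ with hccdef
  have hcc0 : 0 < cc := lt_min hc (by positivity)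
  have hccc : cc ≤ c := min_le_left _ _
  have hcc2 : cc ≤ ((2:ℝ)^(d+1))⁻¹ := min_le_right _ _
  have hcchalf : cc ≤ 1/2 := by
    refine hcc2.trans ?_
    rw [inv_le_comm₀ (by positivity) (by norm_num)]
    calc (1/2 : ℝ)⁻¹ = 2^1 := by norm_num
    _ ≤ 2^(d+1) := by
      apply pow_le_pow_right₀ (by norm_num)
      omega
  have hcc1 : cc ≤ 1 := hcchalf.trans (by norm_num)
  refine ⟨cc/2, by positivity, (1 + 2^(d+2)/cc^d)⁻¹, by positivity, ?_⟩
  intro p hp V _ _ H hunif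
  obtain ⟨hp0, hpcc⟩ := hp
  have hp1 : p ≤ 1 := le_of_lt (lt_of_lt_of_le hpcc (by linarith))
  have hq0 : (0:ℝ) ≤ 1 - p := by linarith
  have hw0 : ∀ S : Finset V, 0 ≤ p ^ S.card * (1 - p) ^ (Fintype.card V - S.card) :=
    fun S => by positivity
  set K : ℝ := cc / p with hKdef
  have hK2 : 2 < K := by
    rw [hKdef, lt_div_iff₀ hp0]; linarith
  have hK1 : 1 ≤ K := by linarith
  have hK0 : 0 < K := by linarith
  -- choose a maximum-cardinality branching subfamily
  have hne : (H.powerset.filter (fun G => branching V G K)).Nonempty := by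
    refine ⟨∅, Finset.mem_filter.mpr ⟨Finset.empty_mem_powerset H, ?_⟩⟩
    intro A r
    simp only [Finset.filter_empty, Finset.card_empty, Nat.cast_zero]
    positivity
  obtain ⟨H', hH'mem, hmax⟩ := Finset.exists_max_image _ Finset.card hne
  obtain ⟨hH'pow, hH'br⟩ := Finset.mem_filter.mp hH'mem
  have hsub : H' ⊆ H := Finset.mem_powerset.mp hH'pow
  have hunif' : ∀ f ∈ H', f.card = d := fun f hf => hunif f (hsub hf)
  set deg : Finset V → ℕ := fun A => (H'.filter (fun f => A ⊆ f)).card with hdegdef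
  -- branching gives degree bounds
  have hdeg : ∀ A : Finset V, A.card ≤ d → (deg A : ℝ) ≤ K ^ (d - A.card) := by
    intro A hA
    have : H'.filter (fun f => A ⊆ f)
        = H'.filter (fun f => A ⊆ f ∧ f.card = A.card + (d - A.card)) := by
      apply Finset.filter_congr
      intro f hf
      have := hunif' f hf
      constructor
      · intro h; exact ⟨h, by omega⟩
      · intro h; exact h.1
    rw [hdegdef]; simp only []
    rw [this]
    exact hH'br A (d - A.card)
  set Bset : Finset (Finset V) := Finset.univ.filter
    (fun A => A.card < d ∧ K ^ (d - A.card) - 1 < (deg A : ℝ)) with hBdef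
  -- key maximality lemma
  have hKM : ∀ e ∈ H, e ∉ H' → ∃ A ∈ Bset, A ⊆ e := by
    intro e he heH'
    have hbr : ¬ branching V (insert e H') K := by
      intro hbr
      have hmem : insert e H' ∈ H.powerset.filter (fun G => branching V G K) :=
        Finset.mem_filter.mpr ⟨Finset.mem_powerset.mpr (Finset.insert_subset he hsub), hbr⟩
      have h1 := hmax _ hmem
      rw [Finset.card_insert_of_notMem heH'] at h1
      omega
    rw [branching] at hbr
    push_neg at hbr
    obtain ⟨A, r, hAr⟩ := hbr
    set s := (insert e H').filter (fun f => A ⊆ f ∧ f.card = A.card + r) with hsdef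
    have hKr1 : (1:ℝ) ≤ K ^ r := one_le_pow₀ hK1
    have hs2 : 1 < s.card := by
      have : (1:ℝ) < (s.card : ℝ) := lt_of_le_of_lt hKr1 hAr
      exact_mod_cast this
    obtain ⟨f, hfs⟩ := Finset.card_pos.mp (show 0 < s.card by omega)
    have hfins : f ∈ insert e H' := (Finset.mem_filter.mp hfs).1
    have hfprop := (Finset.mem_filter.mp hfs).2
    have hfH : f ∈ H := by
      rcases Finset.mem_insert.mp hfins with h | h
      · exact h ▸ he
      · exact hsub h
    have hfcard : f.card = d := hunif f hfH
    have hdr : A.card + r = d := by omega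
    have hr0 : r ≠ 0 := by
      intro h
      subst h
      have hsing : s ⊆ {A} := by
        intro g hg
        have hgp := (Finset.mem_filter.mp hg).2
        have : A = g := Finset.eq_of_subset_of_card_le hgp.1 (by omega)
        simp [← this]
      have := Finset.card_le_card hsing
      simp at this
      omega
    have hAe : A ⊆ e := by
      by_contra hAe
      have hss : s ⊆ H'.filter (fun f => A ⊆ f ∧ f.card = A.card + r) := by
        intro g hg
        rw [Finset.mem_filter] at hg ⊢
        refine ⟨?_, hg.2⟩
        rcases Finset.mem_insert.mp hg.1 with h | h
        · exact absurd (h ▸ hg.2.1) hAe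
        · exact h
      have h2 : (s.card : ℝ) ≤ ((H'.filter (fun f => A ⊆ f ∧ f.card = A.card + r)).card : ℝ) := by
        exact_mod_cast Finset.card_le_card hss
      linarith [hH'br A r]
    have hdegA : (s.card : ℝ) ≤ (deg A : ℝ) + 1 := by
      have hss : s ⊆ insert e (H'.filter (fun f => A ⊆ f)) := by
        intro g hg
        rw [Finset.mem_filter] at hg
        rcases Finset.mem_insert.mp hg.1 with h | h
        · exact Finset.mem_insert.mpr (Or.inl h)
        · exact Finset.mem_insert.mpr (Or.inr (Finset.mem_filter.mpr ⟨h, hg.2.1⟩))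
      have := (Finset.card_le_card hss).trans (Finset.card_insert_le _ _)
      have h3 : (s.card : ℝ) ≤ ((H'.filter (fun f => A ⊆ f)).card : ℝ) + 1 := by
        exact_mod_cast this
      exact h3
    refine ⟨A, Finset.mem_filter.mpr ⟨Finset.mem_univ _, by omega, ?_⟩, hAe⟩
    have hda : d - A.card = r := by omega
    rw [hda]
    have : (deg A : ℝ) = ((H'.filter (fun f => A ⊆ f)).card : ℝ) := rfl
    linarith [hAr, hdegA]
  -- step B
  have stepB : hitp V p H ≤ hitp V p H' + ∑ A ∈ Bset, p ^ A.card := by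
    have hsumA : ∑ A ∈ Bset, (p:ℝ) ^ A.card
        = ∑ S : Finset V, ∑ A ∈ Bset,
            (if A ⊆ S then p ^ S.card * (1 - p) ^ (Fintype.card V - S.card) else 0) := by
      rw [Finset.sum_comm]
      exact Finset.sum_congr rfl (fun A _ => (sum_if_subset V p A).symm)
    simp only [hitp]
    rw [hsumA, ← Finset.sum_add_distrib]
    apply Finset.sum_le_sum
    intro S _
    have hnn : ∀ A ∈ Bset,
        (0:ℝ) ≤ (if A ⊆ S then p ^ S.card * (1 - p) ^ (Fintype.card V - S.card) else 0) := by
      intro A _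
      split
      · exact hw0 S
      · exact le_refl 0
    have hnn2 : (0:ℝ) ≤ (if (H'.filter (fun e => e ⊆ S)).Nonempty then
        p ^ S.card * (1 - p) ^ (Fintype.card V - S.card) else 0) := by
      split
      · exact hw0 S
      · exact le_refl 0
    by_cases hH : (H.filter (fun e => e ⊆ S)).Nonempty
    · rw [if_pos hH]
      obtain ⟨e, heS⟩ := hH
      rw [Finset.mem_filter] at heS
      obtain ⟨heH, heSsub⟩ := heS
      by_cases heH' : e ∈ H'
      · rw [if_pos ⟨e, Finset.mem_filter.mpr ⟨heH', heSsub⟩⟩]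
        have := Finset.sum_nonneg hnn
        linarith
      · obtain ⟨A, hAB, hAe⟩ := hKM e heH heH'
        have h1 : p ^ S.card * (1 - p) ^ (Fintype.card V - S.card)
            ≤ ∑ A ∈ Bset,
              (if A ⊆ S then p ^ S.card * (1 - p) ^ (Fintype.card V - S.card) else 0) := by
          have h2 := Finset.single_le_sum hnn hAB
          rwa [if_pos (hAe.trans heSsub)] at h2
        linarith
    · rw [if_neg hH]
      have := Finset.sum_nonneg hnn
      linarith
  -- step C
  have stepC : (H'.card : ℝ) * p ^ d ≤ 2 * hitp V p H' := by
    set k : Finset V → ℕ := fun S => (H'.filter (fun e => e ⊆ S)).card with hkdef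
    have hkind : ∀ S : Finset V, (k S : ℝ) = ∑ e ∈ H', (if e ⊆ S then (1:ℝ) else 0) := by
      intro S
      rw [hkdef]
      simp only []
      rw [Finset.card_filter]
      push_cast
      rfl
    have c1 : ∑ S : Finset V,
        (k S : ℝ) * (p ^ S.card * (1-p) ^ (Fintype.card V - S.card)) = (H'.card : ℝ) * p ^ d := by
      calc ∑ S : Finset V, (k S : ℝ) * (p ^ S.card * (1-p) ^ (Fintype.card V - S.card))
          = ∑ S : Finset V, ∑ e ∈ H',
            (if e ⊆ S then p ^ S.card * (1-p) ^ (Fintype.card V - S.card) else 0) := by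
            refine Finset.sum_congr rfl (fun S _ => ?_)
            rw [hkind, Finset.sum_mul]
            exact Finset.sum_congr rfl (fun e _ => by split <;> simp)
        _ = ∑ e ∈ H', ∑ S : Finset V,
            (if e ⊆ S then p ^ S.card * (1-p) ^ (Fintype.card V - S.card) else 0) :=
            Finset.sum_comm
        _ = ∑ e ∈ H', p ^ e.card :=
            Finset.sum_congr rfl (fun e _ => sum_if_subset V p e)
        _ = ∑ e ∈ H', p ^ d :=
            Finset.sum_congr rfl (fun e he => by rw [hunif' e he])
        _ = (H'.card : ℝ) * p ^ d := by rw [Finset.sum_const, nsmul_eq_mul]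
    have c2 : ∑ S : Finset V,
        ((k S : ℝ))^2 * (p ^ S.card * (1-p) ^ (Fintype.card V - S.card))
          = ∑ e ∈ H', ∑ f ∈ H', p ^ ((e ∪ f).card) := by
      calc ∑ S : Finset V, ((k S : ℝ))^2 * (p ^ S.card * (1-p) ^ (Fintype.card V - S.card))
          = ∑ S : Finset V, ∑ e ∈ H', ∑ f ∈ H',
              (if e ∪ f ⊆ S then p ^ S.card * (1-p) ^ (Fintype.card V - S.card) else 0) := by
            refine Finset.sum_congr rfl (fun S _ => ?_)
            rw [sq, hkind, Finset.sum_mul_sum, Finset.sum_mul]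
            refine Finset.sum_congr rfl (fun e _ => ?_)
            rw [Finset.sum_mul]
            refine Finset.sum_congr rfl (fun f _ => ?_)
            by_cases h1 : e ⊆ S <;> by_cases h2 : f ⊆ S <;>
              simp [h1, h2, Finset.union_subset_iff]
        _ = ∑ e ∈ H', ∑ f ∈ H', ∑ S : Finset V,
              (if e ∪ f ⊆ S then p ^ S.card * (1-p) ^ (Fintype.card V - S.card) else 0) := by
            rw [Finset.sum_comm]
            exact Finset.sum_congr rfl (fun e _ => Finset.sum_comm)
        _ = ∑ e ∈ H', ∑ f ∈ H', p ^ ((e ∪ f).card) :=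
            Finset.sum_congr rfl (fun e _ => Finset.sum_congr rfl
              (fun f _ => sum_if_subset V p (e ∪ f)))
    have c3 : ∀ e ∈ H', ∑ f ∈ H'.erase e, p ^ ((e ∪ f).card) ≤ p ^ d / 2 := by
      intro e he
      have hecard := hunif' e he
      have hrw : ∀ f ∈ H'.erase e, p ^ ((e ∪ f).card)
          = ∑ B ∈ e.powerset, (if B = e ∩ f then p ^ (2*d - B.card) else 0) := by
        intro f hf
        rw [Finset.sum_ite_eq' e.powerset (e ∩ f) (fun B => p ^ (2*d - B.card))]
        rw [if_pos (Finset.mem_powerset.mpr Finset.inter_subset_left)]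
        congr 1
        have h1 := Finset.card_union_add_card_inter e f
        have hfc := hunif' f (Finset.mem_of_mem_erase hf)
        omega
      rw [Finset.sum_congr rfl hrw, Finset.sum_comm]
      have hBb : ∀ B ∈ e.powerset,
          ∑ f ∈ H'.erase e, (if B = e ∩ f then p ^ (2*d - B.card) else 0) ≤ cc * p ^ d := by
        intro B hBmem
        have hBe : B ⊆ e := Finset.mem_powerset.mp hBmem
        by_cases hBeq : B = e
        · have hzero : ∀ f ∈ H'.erase e, (if B = e ∩ f then p ^ (2*d - B.card) else 0) = 0 := by
            intro f hf
            rw [if_neg]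
            intro h
            have hef : e ⊆ f := by
              rw [hBeq] at h
              exact h ▸ Finset.inter_subset_right
            have hfc := hunif' f (Finset.mem_of_mem_erase hf)
            have : f = e := (Finset.eq_of_subset_of_card_le hef (by omega)).symm
            exact (Finset.ne_of_mem_erase hf) this
          rw [Finset.sum_congr rfl hzero, Finset.sum_const_zero]
          positivity
        · have hblt : B.card < d := by
            have := Finset.card_lt_card (Finset.ssubset_iff_subset_ne.mpr ⟨hBe, hBeq⟩)
            omega
          have hcount : ∑ f ∈ H'.erase e, (if B = e ∩ f then p ^ (2*d - B.card) else 0)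
              ≤ (deg B : ℝ) * p ^ (2*d - B.card) := by
            rw [← Finset.sum_filter, Finset.sum_const, nsmul_eq_mul]
            have hsubB : (H'.erase e).filter (fun f => B = e ∩ f) ⊆ H'.filter (fun f => B ⊆ f) := by
              intro g hg
              rw [Finset.mem_filter] at hg ⊢
              exact ⟨Finset.mem_of_mem_erase hg.1, hg.2 ▸ Finset.inter_subset_right⟩
            have hcc : (((H'.erase e).filter (fun f => B = e ∩ f)).card : ℝ) ≤ (deg B : ℝ) := by
              exact_mod_cast Finset.card_le_card hsubB
            exact mul_le_mul_of_nonneg_right hcc (by positivity)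
          have hKb : (deg B : ℝ) * p ^ (2*d - B.card) ≤ K ^ (d - B.card) * p ^ (2*d - B.card) :=
            mul_le_mul_of_nonneg_right (hdeg B (by omega)) (by positivity)
          have heq : K ^ (d - B.card) * p ^ (2*d - B.card) = cc ^ (d - B.card) * p ^ d := by
            have hsplit : 2*d - B.card = (d - B.card) + d := by omega
            rw [hsplit, pow_add, hKdef, div_pow, ← mul_assoc]
            rw [div_mul_cancel₀]
            exact pow_ne_zero _ (ne_of_gt hp0)
          have hccb : cc ^ (d - B.card) * p ^ d ≤ cc * p ^ d := by
            have h1 : cc ^ (d - B.card) ≤ cc ^ 1 :=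
              pow_le_pow_of_le_one hcc0.le hcc1 (by omega)
            rw [pow_one] at h1
            exact mul_le_mul_of_nonneg_right h1 (by positivity)
          linarith
      calc ∑ B ∈ e.powerset, ∑ f ∈ H'.erase e, (if B = e ∩ f then p ^ (2*d - B.card) else 0)
          ≤ ∑ _B ∈ e.powerset, cc * p ^ d := Finset.sum_le_sum hBb
        _ = (e.powerset.card : ℝ) * (cc * p ^ d) := by rw [Finset.sum_const, nsmul_eq_mul]
        _ = (2:ℝ)^d * (cc * p ^ d) := by
            rw [Finset.card_powerset, hecard]
            push_cast
            ring
        _ ≤ p ^ d / 2 := by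
            have h2 : (2:ℝ)^d * cc ≤ 1/2 := by
              have h3 : (2:ℝ)^d * cc ≤ (2:ℝ)^d * ((2:ℝ)^(d+1))⁻¹ :=
                mul_le_mul_of_nonneg_left hcc2 (by positivity)
              have h4 : (2:ℝ)^d * ((2:ℝ)^(d+1))⁻¹ = 1/2 := by
                rw [pow_succ]
                field_simp
              linarith
            have h5 : (0:ℝ) ≤ p ^ d := by positivity
            nlinarith
    have hpt2 : ∀ S : Finset V,
        (3*(k S : ℝ) - (k S : ℝ)^2)/2 * (p ^ S.card * (1-p) ^ (Fintype.card V - S.card))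
          ≤ (if (H'.filter (fun e => e ⊆ S)).Nonempty then
              p ^ S.card * (1-p) ^ (Fintype.card V - S.card) else 0) := by
      intro S
      rcases Nat.eq_zero_or_pos (k S) with h | h
      · have hemp : ¬ (H'.filter (fun e => e ⊆ S)).Nonempty := by
          rw [← Finset.card_pos]
          have h' : (H'.filter (fun e => e ⊆ S)).card = 0 := h
          omega
        rw [if_neg hemp, h]
        norm_num
      · have hne2 : (H'.filter (fun e => e ⊆ S)).Nonempty := Finset.card_pos.mp h
        rw [if_pos hne2]
        have hfac : (3*(k S : ℝ) - (k S : ℝ)^2)/2 ≤ 1 := by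
          rcases Nat.lt_or_ge (k S) 2 with h2 | h2
          · have : k S = 1 := by omega
            rw [this]
            norm_num
          · have h3 : (2:ℝ) ≤ (k S : ℝ) := by exact_mod_cast h2
            nlinarith
        exact mul_le_of_le_one_left (hw0 S) hfac
    have hlin : ∑ S : Finset V,
        (3*(k S : ℝ) - (k S : ℝ)^2)/2 * (p ^ S.card * (1-p) ^ (Fintype.card V - S.card))
        = (3 * ((H'.card : ℝ) * p ^ d) - ∑ e ∈ H', ∑ f ∈ H', p ^ ((e ∪ f).card))/2 := by
      rw [← c1, ← c2, Finset.mul_sum, ← Finset.sum_sub_distrib, Finset.sum_div]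
      exact Finset.sum_congr rfl (fun S _ => by ring)
    have hY : ∑ e ∈ H', ∑ f ∈ H', p ^ ((e ∪ f).card) ≤ (H'.card : ℝ) * (p^d + p^d/2) := by
      calc ∑ e ∈ H', ∑ f ∈ H', p ^ ((e ∪ f).card)
          ≤ ∑ e ∈ H', (p^d + p^d/2) := by
            refine Finset.sum_le_sum (fun e he => ?_)
            rw [← Finset.add_sum_erase _ _ he, Finset.union_self, hunif' e he]
            exact add_le_add le_rfl (c3 e he)
        _ = (H'.card : ℝ) * (p^d + p^d/2) := by rw [Finset.sum_const, nsmul_eq_mul]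
    have hmain : (3 * ((H'.card : ℝ) * p ^ d) - (H'.card : ℝ) * (p^d + p^d/2))/2 ≤ hitp V p H' := by
      simp only [hitp]
      have h6 := Finset.sum_le_sum (s := (Finset.univ : Finset (Finset V))) (fun S _ => hpt2 S)
      rw [hlin] at h6
      have h7 : (3 * ((H'.card : ℝ) * p ^ d) - (H'.card : ℝ) * (p^d + p^d/2))/2
          ≤ (3 * ((H'.card : ℝ) * p ^ d) - ∑ e ∈ H', ∑ f ∈ H', p ^ ((e ∪ f).card))/2 := by
        linarith
      exact h7.trans h6
    have hX0 : (0:ℝ) ≤ (H'.card : ℝ) * p ^ d := by positivity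
    have : (3 * ((H'.card : ℝ) * p ^ d) - (H'.card : ℝ) * (p^d + p^d/2))/2
        = (3/4) * ((H'.card : ℝ) * p ^ d) := by ring
    rw [this] at hmain
    linarith
  -- step D
  have stepD : ∑ A ∈ Bset, (p:ℝ) ^ A.card ≤ 2^(d+1) / cc^d * ((H'.card : ℝ) * p ^ d) := by
    have hper : ∀ A ∈ Bset, (p:ℝ)^A.card ≤ 2*(deg A : ℝ) * (p^d/cc^d) := by
      intro A hA
      rw [hBdef, Finset.mem_filter] at hA
      obtain ⟨-, hAd, hAdeg⟩ := hA
      have hKd : (2:ℝ) ≤ K ^ (d - A.card) :=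
        le_trans hK2.le (le_self_pow₀ hK1 (by omega))
      have hKdeg : K ^ (d - A.card) ≤ 2 * (deg A : ℝ) := by linarith
      have hKpos : (0:ℝ) < K ^ (d - A.card) := pow_pos hK0 _
      have h1 : (p:ℝ)^A.card ≤ 2*(deg A : ℝ) * (p^A.card / K^(d-A.card)) := by
        rw [mul_div_assoc'] at *
        rw [le_div_iff₀ hKpos]
        calc p^A.card * K^(d-A.card) ≤ p^A.card * (2*(deg A : ℝ)) :=
              mul_le_mul_of_nonneg_left hKdeg (by positivity)
          _ = 2*(deg A : ℝ) * p^A.card := by ring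
      have h2 : p^A.card / K^(d-A.card) = p^d / cc^(d-A.card) := by
        have hd : A.card + (d - A.card) = d := by omega
        rw [hKdef, div_pow, div_div_eq_mul_div, ← pow_add, hd]
      have h3 : p^d / cc^(d-A.card) ≤ p^d / cc^d := by
        apply div_le_div_of_nonneg_left (by positivity) (by positivity)
        exact pow_le_pow_of_le_one hcc0.le hcc1 (by omega)
      calc (p:ℝ)^A.card ≤ 2*(deg A : ℝ) * (p^A.card / K^(d-A.card)) := h1
        _ = 2*(deg A : ℝ) * (p^d / cc^(d-A.card)) := by rw [h2]
        _ ≤ 2*(deg A : ℝ) * (p^d/cc^d) := by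
            apply mul_le_mul_of_nonneg_left h3 (by positivity)
    have hdegsum : ∑ A ∈ Bset, (deg A : ℝ) ≤ (2:ℝ)^d * (H'.card : ℝ) := by
      have hdind : ∀ A : Finset V, (deg A : ℝ) = ∑ f ∈ H', (if A ⊆ f then (1:ℝ) else 0) := by
        intro A
        rw [hdegdef]
        simp only []
        rw [Finset.card_filter]
        push_cast
        rfl
      calc ∑ A ∈ Bset, (deg A : ℝ)
          = ∑ A ∈ Bset, ∑ f ∈ H', (if A ⊆ f then (1:ℝ) else 0) :=
            Finset.sum_congr rfl (fun A _ => hdind A)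
        _ = ∑ f ∈ H', ∑ A ∈ Bset, (if A ⊆ f then (1:ℝ) else 0) := Finset.sum_comm
        _ ≤ ∑ f ∈ H', (2:ℝ)^d := by
            refine Finset.sum_le_sum (fun f hf => ?_)
            rw [← Finset.sum_filter, Finset.sum_const, nsmul_eq_mul, mul_one]
            have hsubf : Bset.filter (fun A => A ⊆ f) ⊆ f.powerset := by
              intro A hA
              exact Finset.mem_powerset.mpr (Finset.mem_filter.mp hA).2
            have := Finset.card_le_card hsubf
            rw [Finset.card_powerset, hunif' f hf] at this
            exact_mod_cast this
        _ = (H'.card : ℝ) * (2:ℝ)^d := by rw [Finset.sum_const, nsmul_eq_mul]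
        _ = (2:ℝ)^d * (H'.card : ℝ) := by ring
    calc ∑ A ∈ Bset, (p:ℝ)^A.card
        ≤ ∑ A ∈ Bset, 2*(deg A : ℝ)*(p^d/cc^d) := Finset.sum_le_sum hper
      _ = 2*(p^d/cc^d) * ∑ A ∈ Bset, (deg A : ℝ) := by
          rw [Finset.mul_sum]
          exact Finset.sum_congr rfl (fun A _ => by ring)
      _ ≤ 2*(p^d/cc^d) * ((2:ℝ)^d * (H'.card : ℝ)) := by
          apply mul_le_mul_of_nonneg_left hdegsum (by positivity)
      _ = 2^(d+1)/cc^d * ((H'.card : ℝ) * p ^ d) := by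
          rw [pow_succ]
          ring
  refine ⟨H', hsub, ?_, ?_⟩
  · intro A r
    refine (hH'br A r).trans ?_
    apply pow_le_pow_left₀ (le_of_lt hK0)
    rw [hKdef]
    exact div_le_div_of_nonneg_right hccc hp0.le |>.trans_eq rfl
  · have hHp' : hitp V p H ≤ (1 + 2^(d+2)/cc^d) * hitp V p H' := by
      have h1 : ∑ A ∈ Bset, (p:ℝ) ^ A.card ≤ 2^(d+1)/cc^d * (2 * hitp V p H') := by
        refine stepD.trans ?_
        apply mul_le_mul_of_nonneg_left stepC (by positivity)
      have : (2:ℝ)^(d+1)/cc^d * (2 * hitp V p H') = 2^(d+2)/cc^d * hitp V p H' := by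
        rw [pow_succ (2:ℝ) (d+1)]
        ring
      rw [this] at h1
      calc hitp V p H ≤ hitp V p H' + ∑ A ∈ Bset, p ^ A.card := stepB
      _ ≤ hitp V p H' + 2^(d+2)/cc^d * hitp V p H' := by linarith
      _ = (1 + 2^(d+2)/cc^d) * hitp V p H' := by ring
    have hM0 : (0:ℝ) < 1 + 2^(d+2)/cc^d := by positivity
    calc (1 + 2^(d+2)/cc^d)⁻¹ * hitp V p H
        ≤ (1 + 2^(d+2)/cc^d)⁻¹ * ((1 + 2^(d+2)/cc^d) * hitp V p H') :=
          mul_le_mul_of_nonneg_left hHp' (by positivity)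
      _ = hitp V p H' := by field_simp
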